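/- If α = (α_0,...,α_{N-1}) is a vector of nonnegative reals with ℓ2-norm 1, and A = (A_0,...,A_{N-1}) is obtained by rounding each α_i down to g bits of precision (so A_i ≤ α_i and α_i - A_i < 2^{-g}), then the inner product ⟨α, A⟩ / ‖A‖₂ ≥ ‖A‖₂ ≥ √(1 - 2·2^{-g}·‖α‖₁). -/

import Mathlib

open Finset Real

/-- g-bit rounding towards zero: ⟨α, A⟩ / ‖A‖₂ ≥ ‖A‖₂ ≥ √(1 - 2·2^{-g}·‖α‖₁). -/
theorem stmt_0 (N g : ℕ) (hN : 0 < N) (hg : 0 < g)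
    (α A : Fin N → ℝ)
    (hα_nonneg : ∀ i, 0 ≤ α i)
    (hα_norm : ∑ i, (α i) ^ 2 = 1)
    (hA : ∀ i, A i = ⌊(2 : ℝ) ^ g * α i⌋ / 2 ^ g)
    (hA_pos : 0 < Real.sqrt (∑ i, (A i) ^ 2)) :
    (∑ i, α i * A i) / Real.sqrt (∑ i, (A i) ^ 2) ≥ Real.sqrt (∑ i, (A i) ^ 2) ∧
    Real.sqrt (∑ i, (A i) ^ 2) ≥ Real.sqrt (1 - 2 * ((2 : ℝ) ^ g)⁻¹ * ∑ i, α i) := by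
  have hpow : (0:ℝ) < 2 ^ g := by positivity
  have hA_nonneg : ∀ i, 0 ≤ A i := by
    intro i
    rw [hA i]
    apply div_nonneg _ (le_of_lt hpow)
    exact_mod_cast Int.floor_nonneg.2 (mul_nonneg (by positivity) (hα_nonneg i))
  have hA_le : ∀ i, A i ≤ α i := by
    intro i
    rw [hA i, div_le_iff₀ hpow]
    calc (⌊(2:ℝ)^g * α i⌋ : ℝ) ≤ 2^g * α i := Int.floor_le _
    _ = α i * 2^g := mul_comm _ _
  have hdiff : ∀ i, α i - A i < (2^g)⁻¹ := by
    intro i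
    have h := Int.lt_floor_add_one ((2:ℝ)^g * α i)
    rw [hA i, sub_lt_iff_lt_add, inv_eq_one_div, ← add_div, lt_div_iff₀ hpow]
    linarith [h, mul_comm (α i) ((2:ℝ)^g)]
  have hsum_le : ∑ i, (A i) ^ 2 ≤ ∑ i, α i * A i := by
    apply Finset.sum_le_sum
    intro i _
    rw [sq]
    exact mul_le_mul_of_nonneg_right (hA_le i) (hA_nonneg i)
  have hs2 : Real.sqrt (∑ i, (A i) ^ 2) ^ 2 = ∑ i, (A i) ^ 2 :=
    Real.sq_sqrt (Finset.sum_nonneg fun i _ => sq_nonneg _)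
  constructor
  · rw [ge_iff_le, le_div_iff₀ hA_pos]
    calc Real.sqrt (∑ i, (A i)^2) * Real.sqrt (∑ i, (A i)^2)
        = ∑ i, (A i)^2 := Real.mul_self_sqrt (Finset.sum_nonneg fun i _ => sq_nonneg _)
    _ ≤ ∑ i, α i * A i := hsum_le
  · apply Real.sqrt_le_sqrt
    have : ∀ i, α i ^ 2 - 2 * (2^g:ℝ)⁻¹ * α i ≤ (A i)^2 := by
      intro i
      have h1 : α i ^ 2 - (A i)^2 = (α i - A i) * (α i + A i) := by ring
      have h2 : (α i - A i) * (α i + A i) ≤ (2^g:ℝ)⁻¹ * (2 * α i) := by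
        apply mul_le_mul (le_of_lt (hdiff i)) _ (add_nonneg (hα_nonneg i) (hA_nonneg i)) (by positivity)
        linarith [hA_le i]
      nlinarith
    calc 1 - 2 * ((2:ℝ)^g)⁻¹ * ∑ i, α i
        = ∑ i, (α i ^ 2 - 2 * (2^g:ℝ)⁻¹ * α i) := by
          rw [Finset.sum_sub_distrib, hα_norm, ← Finset.mul_sum]
    _ ≤ ∑ i, (A i)^2 := Finset.sum_le_sum fun i _ => this i
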